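/- Let v1 and v2 be nonempty closed convex subsets of ℝ³ (EuclideanSpace ℝ (Fin 3)) with v1 ∩ v2 ≠ ∅, let f : ℝ → ℝ be a shaping function that additionally satisfies f(t) > 0 for all t > 0, and let α ∈ [0,1]. Then the interpolated object v^α_{v1→v2} = {x | (1−α)·f(SDF_{v1}(x)) + α·f(SDF_{v2}(x)) ≤ 0} is a convex set and satisfies v1 ∩ v2 ⊆ v^α_{v1→v2} ⊆ v1 ∪ v2. -/

import Mathlib

open Metric
open scoped RealInnerProductSpace

/-- Signed distance function of a set `v`. -/
noncomputable def sdf (v : Set (EuclideanSpace ℝ (Fin 3)))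
    (x : EuclideanSpace ℝ (Fin 3)) : ℝ :=
  Metric.infDist x v - Metric.infDist x vᶜ

local notation "E" => EuclideanSpace ℝ (Fin 3)

/-- Separation via metric projection: for `u ∉ v` (closed convex nonempty), there is a unit
vector `w` and `p ∈ v` with `⟪w, u - p⟫ = infDist u v` and `v` on one side of the hyperplane. -/
lemma sep_point (v : Set E) (hne : v.Nonempty) (hcl : IsClosed v) (hcv : Convex ℝ v)
    {u : E} (hu : u ∉ v) :
    ∃ w p, p ∈ v ∧ ‖w‖ = 1 ∧ ⟪w, u - p⟫ = Metric.infDist u v ∧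
      ∀ a ∈ v, ⟪w, a⟫ ≤ ⟪w, p⟫ := by
  obtain ⟨p, hp, hpd⟩ := exists_norm_eq_iInf_of_complete_convex hne
    (hcl.isComplete) hcv u
  have hproj : ∀ a ∈ v, ⟪u - p, a - p⟫ ≤ 0 :=
    (norm_eq_iInf_iff_real_inner_le_zero hcv hp).mp hpd
  have hdist : ‖u - p‖ = Metric.infDist u v := by
    rw [Metric.infDist_eq_iInf, hpd]
    simp [dist_eq_norm]
  have hup : u - p ≠ 0 := sub_ne_zero.mpr (fun h => hu (h ▸ hp))
  have hnorm : (0:ℝ) < ‖u - p‖ := norm_pos_iff.mpr hup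
  refine ⟨‖u - p‖⁻¹ • (u - p), p, hp, ?_, ?_, ?_⟩
  · rw [norm_smul, norm_inv, norm_norm, inv_mul_cancel₀ hnorm.ne']
  · rw [real_inner_smul_left, real_inner_self_eq_norm_sq, ← hdist]
    field_simp
  · intro a ha
    have h1 : ⟪‖u - p‖⁻¹ • (u - p), a - p⟫ ≤ 0 := by
      rw [real_inner_smul_left]
      exact mul_nonpos_of_nonneg_of_nonpos (by positivity) (hproj a ha)
    rw [inner_sub_right] at h1
    linarith

/-- Lower bound: any halfspace containing `v` lower-bounds the signed distance. -/
lemma halfspace_le_sdf (v : Set E) (hne : v.Nonempty) (hcl : IsClosed v)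
    {w : E} (hw : ‖w‖ = 1) {c : ℝ} (hvc : ∀ a ∈ v, ⟪w, a⟫ ≤ c) (x : E) :
    ⟪w, x⟫ - c ≤ sdf v x := by
  by_cases hx : x ∈ v
  · -- sdf v x = - infDist x vᶜ
    have h0 : Metric.infDist x v = 0 := Metric.infDist_zero_of_mem hx
    have key : Metric.infDist x vᶜ ≤ c - ⟪w, x⟫ := by
      have hcx : ⟪w, x⟫ ≤ c := hvc x hx
      refine le_of_forall_pos_le_add (fun ε hε => ?_)
      set u : E := x + (c - ⟪w, x⟫ + ε) • w with hu
      have huc : u ∈ vᶜ := by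
        intro huv
        have := hvc u huv
        rw [hu, inner_add_right, real_inner_smul_right, real_inner_self_eq_norm_sq, hw] at this
        nlinarith
      have : dist x u = c - ⟪w, x⟫ + ε := by
        rw [dist_eq_norm, hu, sub_add_cancel_left, norm_neg, norm_smul, hw, mul_one,
          Real.norm_eq_abs, abs_of_nonneg (by linarith)]
      calc Metric.infDist x vᶜ ≤ dist x u := Metric.infDist_le_dist_of_mem huc
        _ = c - ⟪w, x⟫ + ε := this
    simp only [sdf, h0, zero_sub]
    linarith
  · -- sdf v x = infDist x v
    have h0 : Metric.infDist x vᶜ = 0 := Metric.infDist_zero_of_mem hx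
    have key : ⟪w, x⟫ - c ≤ Metric.infDist x v := by
      rw [Metric.infDist_eq_iInf]
      haveI : Nonempty v := hne.to_subtype
      refine le_ciInf fun ap => ?_
      obtain ⟨a, ha⟩ := ap
      simp only [] 
      have h1 : ⟪w, x⟫ - ⟪w, a⟫ = ⟪w, x - a⟫ := by rw [inner_sub_right]
      have h2 : ⟪w, x - a⟫ ≤ ‖w‖ * ‖x - a‖ := real_inner_le_norm w (x - a)
      have := hvc a ha
      rw [dist_eq_norm]
      rw [hw, one_mul] at h2
      linarith
    simp only [sdf, h0, sub_zero]
    exact key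

/-- Approximate supporting halfspace attaining the signed distance up to `ε`. -/
lemma exists_halfspace (v : Set E) (hne : v.Nonempty) (hcl : IsClosed v) (hcv : Convex ℝ v)
    (hcne : vᶜ.Nonempty) (x : E) {ε : ℝ} (hε : 0 < ε) :
    ∃ w c, ‖w‖ = 1 ∧ (∀ a ∈ v, ⟪w, a⟫ ≤ c) ∧ sdf v x ≤ ⟪w, x⟫ - c + ε := by
  by_cases hx : x ∈ v
  · -- get a nearby point of the complement, separate it
    have h0 : Metric.infDist x v = 0 := Metric.infDist_zero_of_mem hx
    set d := Metric.infDist x vᶜ with hd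
    obtain ⟨u, huc, hud⟩ := (Metric.infDist_lt_iff hcne).mp (by linarith : d < d + ε)
    obtain ⟨w, p, hp, hw, hwup, hsep⟩ := sep_point v hne hcl hcv huc
    refine ⟨w, ⟪w, p⟫, hw, hsep, ?_⟩
    have h1 : ⟪w, x⟫ - ⟪w, p⟫ = ⟪w, x - u⟫ + ⟪w, u - p⟫ := by
      rw [inner_sub_right, inner_sub_right]; ring
    have h2 : -(‖w‖ * ‖x - u‖) ≤ ⟪w, x - u⟫ := neg_le_of_abs_le (abs_real_inner_le_norm w (x - u))
    have h3 : (0:ℝ) ≤ Metric.infDist u v := Metric.infDist_nonneg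
    have h4 : ‖x - u‖ = dist x u := (dist_eq_norm x u).symm
    have : sdf v x = -d := by simp [sdf, h0, hd]
    rw [this, hw, one_mul] at *
    nlinarith [hwup]
  · obtain ⟨w, p, hp, hw, hwup, hsep⟩ := sep_point v hne hcl hcv hx
    refine ⟨w, ⟪w, p⟫, hw, hsep, ?_⟩
    have h0 : Metric.infDist x vᶜ = 0 := Metric.infDist_zero_of_mem hx
    have h1 : ⟪w, x⟫ - ⟪w, p⟫ = ⟪w, x - p⟫ := by rw [inner_sub_right]
    have : sdf v x = Metric.infDist x v := by simp [sdf, h0]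
    rw [this, h1]
    linarith [hwup]

/-- The signed distance function of a nonempty closed convex set is convex. -/
lemma sdf_convexOn (v : Set E) (hne : v.Nonempty) (hcl : IsClosed v) (hcv : Convex ℝ v) :
    ConvexOn ℝ Set.univ (sdf v) := by
  by_cases hcne : vᶜ.Nonempty
  · refine ⟨convex_univ, fun x _ y _ a b ha hb hab => ?_⟩
    refine le_of_forall_pos_le_add (fun ε hε => ?_)
    obtain ⟨w, c, hw, hvc, hle⟩ := exists_halfspace v hne hcl hcv hcne (a • x + b • y) hε
    have hx := halfspace_le_sdf v hne hcl hw hvc x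
    have hy := halfspace_le_sdf v hne hcl hw hvc y
    have hz : ⟪w, a • x + b • y⟫ - c = a * (⟪w, x⟫ - c) + b * (⟪w, y⟫ - c) := by
      rw [inner_add_right, real_inner_smul_right, real_inner_smul_right]
      linear_combination c * hab
    rw [hz] at hle
    simp only [smul_eq_mul]
    linarith [mul_le_mul_of_nonneg_left hx ha, mul_le_mul_of_nonneg_left hy hb]
  · have hv : v = Set.univ := by
      rw [← Set.compl_empty_iff]
      exact Set.not_nonempty_iff_eq_empty.mp hcne
    have : ∀ x, sdf v x = 0 := by
      intro x
      simp [sdf, hv, Metric.infDist_empty, Metric.infDist_zero_of_mem (Set.mem_univ x)]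
    refine ⟨convex_univ, fun x _ y _ a b ha hb hab => ?_⟩
    simp [this]

lemma sdf_nonpos_of_mem (v : Set E) {x : E} (hx : x ∈ v) : sdf v x ≤ 0 := by
  have h0 : Metric.infDist x v = 0 := Metric.infDist_zero_of_mem hx
  have : (0:ℝ) ≤ Metric.infDist x vᶜ := Metric.infDist_nonneg
  simp only [sdf, h0]
  linarith

lemma sdf_pos_of_not_mem (v : Set E) (hne : v.Nonempty) (hcl : IsClosed v) {x : E}
    (hx : x ∉ v) : 0 < sdf v x := by
  have h0 : Metric.infDist x vᶜ = 0 := Metric.infDist_zero_of_mem hx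
  have h1 : Metric.infDist x v ≠ 0 := by
    intro h
    exact hx ((hcl.mem_iff_infDist_zero hne).mpr h)
  have h2 : (0:ℝ) ≤ Metric.infDist x v := Metric.infDist_nonneg
  simp only [sdf, h0, sub_zero]
  exact lt_of_le_of_ne h2 (Ne.symm h1)

/-- Proposition 1: given nonempty closed convex `v1, v2` with `v1 ∩ v2 ≠ ∅`, a shaping
function `f` (with `f 0 = 0`, `f` monotone nondecreasing, `f` convex, and additionally
`f t > 0` for `t > 0`), and `α ∈ [0,1]`, the interpolated object
`{x | (1−α)·f(SDF_{v1}(x)) + α·f(SDF_{v2}(x)) ≤ 0}` is convex and lies between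
`v1 ∩ v2` and `v1 ∪ v2`. -/
theorem interpolated_object_convex_and_between
    (v1 v2 : Set (EuclideanSpace ℝ (Fin 3)))
    (h1ne : v1.Nonempty) (h2ne : v2.Nonempty)
    (h1cl : IsClosed v1) (h2cl : IsClosed v2)
    (h1cv : Convex ℝ v1) (h2cv : Convex ℝ v2)
    (hint : (v1 ∩ v2).Nonempty)
    (f : ℝ → ℝ) (hf0 : f 0 = 0) (hfmono : Monotone f)
    (hfconv : ConvexOn ℝ Set.univ f) (hfpos : ∀ t : ℝ, 0 < t → 0 < f t)
    (α : ℝ) (hα : α ∈ Set.Icc (0 : ℝ) 1) :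
    Convex ℝ {x | (1 - α) * f (sdf v1 x) + α * f (sdf v2 x) ≤ 0} ∧
    v1 ∩ v2 ⊆ {x | (1 - α) * f (sdf v1 x) + α * f (sdf v2 x) ≤ 0} ∧
    {x | (1 - α) * f (sdf v1 x) + α * f (sdf v2 x) ≤ 0} ⊆ v1 ∪ v2 := by
  obtain ⟨hα0, hα1⟩ := hα
  have hs1 := sdf_convexOn v1 h1ne h1cl h1cv
  have hs2 := sdf_convexOn v2 h2ne h2cl h2cv
  refine ⟨?_, ?_, ?_⟩
  · -- convexity
    intro x hx y hy a b ha hb hab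
    simp only [Set.mem_setOf_eq] at hx hy ⊢
    have c1 : sdf v1 (a • x + b • y) ≤ a * sdf v1 x + b * sdf v1 y :=
      hs1.2 (Set.mem_univ x) (Set.mem_univ y) ha hb hab
    have c2 : sdf v2 (a • x + b • y) ≤ a * sdf v2 x + b * sdf v2 y :=
      hs2.2 (Set.mem_univ x) (Set.mem_univ y) ha hb hab
    have f1 : f (sdf v1 (a • x + b • y)) ≤ a * f (sdf v1 x) + b * f (sdf v1 y) :=
      le_trans (hfmono c1) (hfconv.2 (Set.mem_univ _) (Set.mem_univ _) ha hb hab)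
    have f2 : f (sdf v2 (a • x + b • y)) ≤ a * f (sdf v2 x) + b * f (sdf v2 y) :=
      le_trans (hfmono c2) (hfconv.2 (Set.mem_univ _) (Set.mem_univ _) ha hb hab)
    nlinarith [mul_le_mul_of_nonneg_left f1 (by linarith : (0:ℝ) ≤ 1 - α),
      mul_le_mul_of_nonneg_left f2 hα0,
      mul_le_mul_of_nonneg_left hx ha, mul_le_mul_of_nonneg_left hy hb]
  · -- v1 ∩ v2 ⊆
    rintro x ⟨hx1, hx2⟩
    simp only [Set.mem_setOf_eq]
    have t1 : f (sdf v1 x) ≤ 0 := hf0 ▸ hfmono (sdf_nonpos_of_mem v1 hx1)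
    have t2 : f (sdf v2 x) ≤ 0 := hf0 ▸ hfmono (sdf_nonpos_of_mem v2 hx2)
    have := mul_nonpos_of_nonneg_of_nonpos (by linarith : (0:ℝ) ≤ 1 - α) t1
    have := mul_nonpos_of_nonneg_of_nonpos hα0 t2
    linarith
  · -- ⊆ v1 ∪ v2
    intro x hx
    simp only [Set.mem_setOf_eq] at hx
    by_contra h
    rw [Set.mem_union] at h
    push_neg at h
    obtain ⟨h1, h2⟩ := h
    have p1 : 0 < f (sdf v1 x) := hfpos _ (sdf_pos_of_not_mem v1 h1ne h1cl h1)
    have p2 : 0 < f (sdf v2 x) := hfpos _ (sdf_pos_of_not_mem v2 h2ne h2cl h2)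
    rcases le_total (f (sdf v1 x)) (f (sdf v2 x)) with h12 | h12
    · nlinarith [mul_le_mul_of_nonneg_left h12 hα0]
    · nlinarith [mul_le_mul_of_nonneg_left h12 (by linarith : (0:ℝ) ≤ 1 - α)]
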